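/- Let G = (C, S, E) be a finite bipartite graph with capacities κ : C → ℝ≥0 and τ : S → ℝ≥0, and let x, y, and x̃ be fractional (κ, τ)-matchings of G such that x̃(e) ≥ x(e) for every e ∈ E and, for every edge e = cs with y(e) > 0, at least one of the following holds: x̃(e) ≥ x(e) + y(e), or x̃(δ(c)) = κ(c), or x̃(δ(s)) = τ(s). Then 2·x̃(E) ≥ y(E). -/
import Mathlib


/-- A fractional `(κ, τ)`-matching on the bipartite graph with edge set `E ⊆ C × S`. -/
def IsFracMatching {C S : Type*} [Fintype C] [Fintype S] [DecidableEq C] [DecidableEq S]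
    (E : Finset (C × S)) (κ : C → ℝ) (τ : S → ℝ) (x : C × S → ℝ) : Prop :=
  (∀ e, 0 ≤ x e) ∧
  (∀ c : C, ∑ e ∈ E.filter (fun e => e.1 = c), x e ≤ κ c) ∧
  (∀ s : S, ∑ e ∈ E.filter (fun e => e.2 = s), x e ≤ τ s)

/-- (MergeInto guarantee.) If `x̃ ≥ x` and every edge carrying positive
`y`-value is either fully merged or blocked at a saturated endpoint, then `2·x̃(E) ≥ y(E)`. -/
theorem stmt_7 {C S : Type*} [Fintype C] [Fintype S] [DecidableEq C] [DecidableEq S]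
    (E : Finset (C × S)) (κ : C → ℝ) (hκ : ∀ c, 0 ≤ κ c) (τ : S → ℝ) (hτ : ∀ s, 0 ≤ τ s)
    (x y xt : C × S → ℝ)
    (hx : IsFracMatching E κ τ x)
    (hy : IsFracMatching E κ τ y)
    (hxt : IsFracMatching E κ τ xt)
    (hge : ∀ e ∈ E, x e ≤ xt e)
    (hsat : ∀ e ∈ E, 0 < y e →
      x e + y e ≤ xt e ∨
      (∑ e' ∈ E.filter (fun e' => e'.1 = e.1), xt e') = κ e.1 ∨
      (∑ e' ∈ E.filter (fun e' => e'.2 = e.2), xt e') = τ e.2) :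
    ∑ e ∈ E, y e ≤ 2 * ∑ e ∈ E, xt e := by
  classical
  set sat1 : C → Prop := fun c => (∑ e' ∈ E.filter (fun e' => e'.1 = c), xt e') = κ c with hs1
  set sat2 : S → Prop := fun s => (∑ e' ∈ E.filter (fun e' => e'.2 = s), xt e') = τ s with hs2
  -- regrouping lemma for the client side
  have regroup1 : ∀ g : C × S → ℝ,
      ∑ e ∈ E.filter (fun e => sat1 e.1), g e
        = ∑ c ∈ Finset.univ.filter sat1, ∑ e ∈ E.filter (fun e => e.1 = c), g e := by
    intro g
    rw [Finset.sum_fiberwise_eq_sum_filter E (Finset.univ.filter sat1) Prod.fst g]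
    congr 1
    ext e
    simp
  have regroup2 : ∀ g : C × S → ℝ,
      ∑ e ∈ E.filter (fun e => sat2 e.2), g e
        = ∑ s ∈ Finset.univ.filter sat2, ∑ e ∈ E.filter (fun e => e.2 = s), g e := by
    intro g
    rw [Finset.sum_fiberwise_eq_sum_filter E (Finset.univ.filter sat2) Prod.snd g]
    congr 1
    ext e
    simp
  -- bound 1: y-sum over client-saturated edges ≤ xt-sum over client-saturated edges
  have bound1 : ∑ e ∈ E.filter (fun e => sat1 e.1), y e
      ≤ ∑ e ∈ E.filter (fun e => sat1 e.1), xt e := by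
    rw [regroup1 y, regroup1 xt]
    apply Finset.sum_le_sum
    intro c hc
    have hc' : sat1 c := (Finset.mem_filter.mp hc).2
    calc ∑ e ∈ E.filter (fun e => e.1 = c), y e ≤ κ c := hy.2.1 c
      _ = ∑ e ∈ E.filter (fun e => e.1 = c), xt e := hc'.symm
  have bound2 : ∑ e ∈ E.filter (fun e => sat2 e.2), y e
      ≤ ∑ e ∈ E.filter (fun e => sat2 e.2), xt e := by
    rw [regroup2 y, regroup2 xt]
    apply Finset.sum_le_sum
    intro s hs
    have hs' : sat2 s := (Finset.mem_filter.mp hs).2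
    calc ∑ e ∈ E.filter (fun e => e.2 = s), y e ≤ τ s := hy.2.2 s
      _ = ∑ e ∈ E.filter (fun e => e.2 = s), xt e := hs'.symm
  -- decompose the total y-sum
  set F : Finset (C × S) := E.filter (fun e => ¬ sat1 e.1) with hF
  have split1 : ∑ e ∈ E, y e
      = ∑ e ∈ E.filter (fun e => sat1 e.1), y e + ∑ e ∈ F, y e :=
    (Finset.sum_filter_add_sum_filter_not E _ y).symm
  have split2 : ∑ e ∈ F, y e
      = ∑ e ∈ F.filter (fun e => sat2 e.2), y e
        + ∑ e ∈ F.filter (fun e => ¬ sat2 e.2), y e :=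
    (Finset.sum_filter_add_sum_filter_not F _ y).symm
  -- bound the middle part by the server-saturated xt-sum
  have bound2' : ∑ e ∈ F.filter (fun e => sat2 e.2), y e
      ≤ ∑ e ∈ E.filter (fun e => sat2 e.2), xt e := by
    refine le_trans ?_ bound2
    apply Finset.sum_le_sum_of_subset_of_nonneg
    · intro e he
      simp only [hF, Finset.mem_filter] at he ⊢
      exact ⟨he.1.1, he.2⟩
    · intro e _ _; exact hy.1 e
  -- merged edges: pointwise bound
  have bound3 : ∑ e ∈ F.filter (fun e => ¬ sat2 e.2), y e
      ≤ ∑ e ∈ F.filter (fun e => ¬ sat2 e.2), xt e := by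
    apply Finset.sum_le_sum
    intro e he
    simp only [hF, Finset.mem_filter] at he
    obtain ⟨⟨heE, hn1⟩, hn2⟩ := he
    by_cases hpos : 0 < y e
    · rcases hsat e heE hpos with hm | h1 | h2
      · have := hx.1 e
        linarith
      · exact absurd h1 hn1
      · exact absurd h2 hn2
    · exact le_trans (le_of_not_gt hpos) (le_trans (hx.1 e) (hge e heE))
  -- combine
  have key : ∑ e ∈ E.filter (fun e => sat1 e.1), xt e
      + ∑ e ∈ E.filter (fun e => sat2 e.2), xt e
      + ∑ e ∈ F.filter (fun e => ¬ sat2 e.2), xt e ≤ 2 * ∑ e ∈ E, xt e := by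
    have h1 : ∑ e ∈ F.filter (fun e => ¬ sat2 e.2), xt e ≤ ∑ e ∈ F, xt e := by
      apply Finset.sum_le_sum_of_subset_of_nonneg (Finset.filter_subset _ _)
      intro e _ _; exact hxt.1 e
    have h2 : ∑ e ∈ E.filter (fun e => sat1 e.1), xt e + ∑ e ∈ F, xt e = ∑ e ∈ E, xt e :=
      Finset.sum_filter_add_sum_filter_not E _ xt
    have h3 : ∑ e ∈ E.filter (fun e => sat2 e.2), xt e ≤ ∑ e ∈ E, xt e := by
      apply Finset.sum_le_sum_of_subset_of_nonneg (Finset.filter_subset _ _)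
      intro e _ _; exact hxt.1 e
    linarith
  linarith [split1, split2, bound1, bound2', bound3, key]
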